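/- Under the hypotheses of the previous setup (holomorphic $m(\theta), l(\theta)$ with $m(0)=l(0)=-1$, relation $l = -1 + a_1(m+1) + \frac{a_2}{2}(m+1)^2 + O((m+1)^3)$ with $a_1$ non-real, and $p\log(-m) + q\log(-l) = i\theta/2$), the second derivatives at $\theta = 0$ are $m''(0) = \frac{p + (a_1^2 + a_2)q}{4(p+a_1 q)^3}$ and $l''(0) = \frac{(a_1 - a_2)p + a_1^3 q}{4(p + a_1 q)^3}$. -/

import Mathlib

open Filter Asymptotics

private lemma aux_const_zero {c : ℂ} {n : ℕ}
    (h : (fun y : ℂ => c * y ^ n) =o[nhds 0] (fun y : ℂ => y ^ n)) : c = 0 := by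
  by_contra hc
  have h2 : (fun y : ℂ => y ^ n) =o[nhds 0] (fun y : ℂ => y ^ n) := by
    have := h.const_mul_left c⁻¹
    simpa [inv_mul_cancel_left₀ hc] using this
  refine isLittleO_irrefl ?_ h2
  have h1 : ∀ᶠ y in nhdsWithin (0:ℂ) {(0:ℂ)}ᶜ, y ^ n ≠ 0 :=
    eventually_mem_nhdsWithin.mono (fun y hy => pow_ne_zero n hy)
  exact h1.frequently.filter_mono nhdsWithin_le_nhds

private lemma aux_bigO_cube {f : ℂ → ℂ} (hf : AnalyticAt ℂ f 0)
    (h : f =O[nhds 0] fun θ : ℂ => θ ^ 3) :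
    f 0 = 0 ∧ deriv f 0 = 0 ∧ deriv (deriv f) 0 = 0 := by
  obtain ⟨P, hP⟩ := hf
  have h1 : (fun y : ℂ => f y - P.partialSum 3 y) =O[nhds 0] fun y => y ^ 3 := by
    have h1 := hP.isBigO_sub_partialSum_pow 3
    simp only [zero_add] at h1
    refine h1.trans (IsBigO.of_bound 1 ?_)
    filter_upwards with y
    simp [norm_pow]
  have hO : (fun y : ℂ => P.partialSum 3 y) =O[nhds 0] fun y => y ^ 3 := by
    have := h.sub h1
    simpa using this
  have hps : ∀ y : ℂ, P.partialSum 3 y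
      = P.coeff 0 + P.coeff 1 * y + P.coeff 2 * y ^ 2 := by
    intro y
    simp [FormalMultilinearSeries.partialSum, Finset.sum_range_succ,
      FormalMultilinearSeries.apply_eq_pow_smul_coeff, smul_eq_mul]
    ring
  have hO' : (fun y : ℂ => P.coeff 0 + P.coeff 1 * y + P.coeff 2 * y ^ 2)
      =O[nhds 0] fun y => y ^ 3 := hO.congr' (by filter_upwards with y using hps y) EventuallyEq.rfl
  have hc0 : P.coeff 0 = 0 := by
    have ht : Tendsto (fun y : ℂ => P.coeff 0 + P.coeff 1 * y + P.coeff 2 * y ^ 2)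
        (nhds 0) (nhds 0) :=
      hO'.trans_tendsto (by simpa using ((continuous_pow 3).tendsto (0:ℂ)))
    have ht2 : Tendsto (fun y : ℂ => P.coeff 0 + P.coeff 1 * y + P.coeff 2 * y ^ 2)
        (nhds 0) (nhds (P.coeff 0)) := by
      have : Continuous (fun y : ℂ => P.coeff 0 + P.coeff 1 * y + P.coeff 2 * y ^ 2) := by
        continuity
      simpa using this.tendsto 0
    exact (tendsto_nhds_unique ht2 ht)
  have hO1 : (fun y : ℂ => P.coeff 1 * y + P.coeff 2 * y ^ 2) =O[nhds 0] fun y => y ^ 3 := by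
    refine hO'.congr' (by filter_upwards with y; rw [hc0]; ring_nf) EventuallyEq.rfl
  have hc1 : P.coeff 1 = 0 := by
    apply aux_const_zero (n := 1)
    have e1 : (fun y : ℂ => P.coeff 1 * y + P.coeff 2 * y ^ 2) =o[nhds 0] fun y : ℂ => y ^ 1 :=
      hO1.trans_isLittleO (isLittleO_pow_pow (by norm_num))
    have e2 : (fun y : ℂ => P.coeff 2 * y ^ 2) =o[nhds 0] fun y : ℂ => y ^ 1 :=
      (isLittleO_pow_pow (by norm_num : 1 < 2)).const_mul_left _
    have := e1.sub e2
    refine this.congr' ?_ EventuallyEq.rfl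
    filter_upwards with y; ring
  have hc2 : P.coeff 2 = 0 := by
    apply aux_const_zero (n := 2)
    have : (fun y : ℂ => P.coeff 1 * y + P.coeff 2 * y ^ 2) =o[nhds 0] fun y : ℂ => y ^ 2 :=
      hO1.trans_isLittleO (isLittleO_pow_pow (by norm_num))
    refine this.congr' ?_ EventuallyEq.rfl
    filter_upwards with y; rw [hc1]; ring
  refine ⟨?_, ?_, ?_⟩
  · have h0 := hP.coeff_zero (fun _ => 1)
    rw [← h0]
    have : P.coeff 0 = P 0 (fun _ => 1) := rfl
    rw [← this, hc0]
  · rw [hP.deriv]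
    have : P.coeff 1 = P 1 (fun _ => 1) := rfl
    rw [← this, hc1]
  · obtain ⟨r, hball⟩ := hP
    have hfs := hball.factorial_smul (1 : ℂ) 2
    have h2 : deriv (deriv f) 0 = iteratedDeriv 2 f 0 := by
      rw [iteratedDeriv_succ, iteratedDeriv_one]
    rw [h2, iteratedDeriv_eq_iteratedFDeriv, ← hfs]
    have : (P 2 fun _ => (1:ℂ)) = P.coeff 2 := rfl
    rw [this, hc2, smul_zero]

private lemma aux_analyticAt_deriv {f : ℂ → ℂ} (h : AnalyticAt ℂ f 0) :
    AnalyticAt ℂ (deriv f) 0 := by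
  have h2 : AnalyticAt ℂ ((ContinuousLinearMap.apply ℂ ℂ (1:ℂ)) ∘ (fderiv ℂ f)) 0 :=
    ((ContinuousLinearMap.apply ℂ ℂ (1:ℂ)).analyticAt _).comp h.fderiv
  have : ((ContinuousLinearMap.apply ℂ ℂ (1:ℂ)) ∘ (fderiv ℂ f)) = deriv f :=
    funext fun z => fderiv_apply_one_eq_deriv
  rwa [this] at h2

/-- Second derivatives of the eigenvalue functions `m(θ), l(θ)` at `θ = 0` under
the geometric-curve relation (to second order) and the generalized Dehn-filling
relation `p log(-m) + q log(-l) = iθ/2`. -/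
theorem second_derivatives_dehn_filling (a1 a2 : ℂ) (ha1 : a1.im ≠ 0)
    (p q : ℝ) (hpq : (p, q) ≠ (0, 0))
    (m l : ℂ → ℂ) (hm : AnalyticAt ℂ m 0) (hl : AnalyticAt ℂ l 0)
    (hm0 : m 0 = -1) (hl0 : l 0 = -1)
    (hrel : (fun θ : ℂ => l θ - (-1 + a1 * (m θ + 1) + a2 / 2 * (m θ + 1) ^ 2))
      =O[nhds 0] fun θ : ℂ => (m θ + 1) ^ 3)
    (hdehn : ∀ᶠ θ : ℂ in nhds 0,
      (p : ℂ) * Complex.log (-(m θ)) + (q : ℂ) * Complex.log (-(l θ)) =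
        Complex.I * θ / 2) :
    iteratedDeriv 2 m 0 = ((p : ℂ) + (a1 ^ 2 + a2) * q) / (4 * ((p : ℂ) + a1 * q) ^ 3) ∧
    iteratedDeriv 2 l 0 = ((a1 - a2) * p + a1 ^ 3 * q) / (4 * ((p : ℂ) + a1 * q) ^ 3) := by
  set μ := deriv m 0 with hμdef
  set lam := deriv l 0 with hlamdef
  set μ2 := deriv (deriv m) 0 with hμ2def
  set lam2 := deriv (deriv l) 0 with hlam2def
  set D := (p:ℂ) + a1 * q with hDdef
  -- D ≠ 0
  have hD : D ≠ 0 := by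
    intro h
    rw [hDdef] at h
    have him : a1.im * q = 0 := by
      have := congrArg Complex.im h
      simpa [Complex.add_im, Complex.mul_im, Complex.ofReal_im, Complex.ofReal_re] using this
    have hq : q = 0 := (mul_eq_zero.mp him).resolve_left ha1
    have hre : p = 0 := by
      have := congrArg Complex.re h
      simpa [hq, Complex.add_re, Complex.mul_re] using this
    exact hpq (by simp [Prod.ext_iff, hre, hq])
  -- analytic derivatives
  have hm' : AnalyticAt ℂ (deriv m) 0 := aux_analyticAt_deriv hm
  have hl' : AnalyticAt ℂ (deriv l) 0 := aux_analyticAt_deriv hl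
  have hevm : ∀ᶠ θ in nhds (0:ℂ), DifferentiableAt ℂ m θ :=
    hm.eventually_analyticAt.mono (fun _ h => h.differentiableAt)
  have hevl : ∀ᶠ θ in nhds (0:ℂ), DifferentiableAt ℂ l θ :=
    hl.eventually_analyticAt.mono (fun _ h => h.differentiableAt)
  -- Part 1 : the relation curve
  set r : ℂ → ℂ := fun θ => l θ - (-1 + a1 * (m θ + 1) + a2 / 2 * (m θ + 1) ^ 2) with hrdef
  have hr_an : AnalyticAt ℂ r 0 :=
    hl.sub ((analyticAt_const.add (analyticAt_const.mul (hm.add analyticAt_const))).add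
      (analyticAt_const.mul ((hm.add analyticAt_const).pow 2)))
  have hmO : (fun θ : ℂ => m θ + 1) =O[nhds 0] fun θ : ℂ => θ := by
    have := hm.differentiableAt.isBigO_sub
    simpa [hm0, sub_neg_eq_add] using this
  have hrO : r =O[nhds 0] fun θ : ℂ => θ ^ 3 := hrel.trans (hmO.pow 3)
  obtain ⟨-, hr1, hr2⟩ := aux_bigO_cube hr_an hrO
  -- derivative of r
  set g : ℂ → ℂ := fun θ => deriv l θ - a1 * deriv m θ - a2 * (m θ + 1) * deriv m θ with hgdef
  have hdr : deriv r =ᶠ[nhds 0] g := by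
    filter_upwards [hevm, hevl] with θ hmθ hlθ
    have Hm := hmθ.hasDerivAt
    have Hl := hlθ.hasDerivAt
    have H1 : HasDerivAt (fun θ => m θ + 1) (deriv m θ) θ := Hm.add_const 1
    have H2 := H1.pow 2
    have H3 := ((H1.const_mul a1).const_add (-1)).add (H2.const_mul (a2/2))
    have Hr := Hl.sub H3
    rw [show deriv r θ = _ from Hr.deriv]
    simp only [hgdef]
    push_cast
    ring
  -- first derivative relation : lam = a1 * μ
  have hg0 : g 0 = lam - a1 * μ - a2 * (m 0 + 1) * μ := rfl
  have e1 : lam = a1 * μ := by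
    have h0 : deriv r 0 = g 0 := hdr.eq_of_nhds
    rw [hr1] at h0
    rw [hg0, hm0] at h0
    linear_combination -h0
  -- second derivative relation
  have Hm0 : HasDerivAt m μ 0 := hm.differentiableAt.hasDerivAt
  have Hl0 : HasDerivAt l lam 0 := hl.differentiableAt.hasDerivAt
  have Hdm0 : HasDerivAt (deriv m) μ2 0 := hm'.differentiableAt.hasDerivAt
  have Hdl0 : HasDerivAt (deriv l) lam2 0 := hl'.differentiableAt.hasDerivAt
  have e2 : lam2 = a1 * μ2 + a2 * μ ^ 2 := by
    have hdg : deriv (deriv r) 0 = deriv g 0 := hdr.deriv_eq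
    have Hg : HasDerivAt g (lam2 - a1 * μ2 - (a2 * μ * μ + a2 * (m 0 + 1) * μ2)) 0 := by
      have P1 : HasDerivAt (fun θ => a2 * (m θ + 1)) (a2 * μ) 0 := (Hm0.add_const 1).const_mul a2
      exact (Hdl0.sub (Hdm0.const_mul a1)).sub (P1.mul Hdm0)
    rw [hr2] at hdg
    rw [Hg.deriv, hm0] at hdg
    linear_combination -hdg
  -- Part 2 : the Dehn filling relation
  have hslitm : ∀ᶠ θ in nhds (0:ℂ), -(m θ) ∈ Complex.slitPlane := by
    refine (hm.continuousAt.neg).eventually_mem ?_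
    rw [show (-m) 0 = 1 by rw [Pi.neg_apply, hm0]; ring]
    exact Complex.isOpen_slitPlane.mem_nhds Complex.one_mem_slitPlane
  have hslitl : ∀ᶠ θ in nhds (0:ℂ), -(l θ) ∈ Complex.slitPlane := by
    refine (hl.continuousAt.neg).eventually_mem ?_
    rw [show (-l) 0 = 1 by rw [Pi.neg_apply, hl0]; ring]
    exact Complex.isOpen_slitPlane.mem_nhds Complex.one_mem_slitPlane
  set φ : ℂ → ℂ := fun θ => (p:ℂ) * (deriv m θ / m θ) + (q:ℂ) * (deriv l θ / l θ) with hφdef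
  set F : ℂ → ℂ := fun θ => (p : ℂ) * Complex.log (-(m θ)) + (q : ℂ) * Complex.log (-(l θ))
    with hFdef
  have hφder : deriv F =ᶠ[nhds 0] φ := by
    filter_upwards [hevm, hevl, hslitm, hslitl] with θ h1 h2 h3 h4
    have L1 : HasDerivAt (fun θ => Complex.log (-(m θ))) (-(deriv m θ) / -(m θ)) θ :=
      (h1.hasDerivAt.neg).clog h3
    have L2 : HasDerivAt (fun θ => Complex.log (-(l θ))) (-(deriv l θ) / -(l θ)) θ :=
      (h2.hasDerivAt.neg).clog h4
    have HF := (L1.const_mul ((p:ℂ))).add (L2.const_mul ((q:ℂ)))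
    rw [show deriv F θ = _ from HF.deriv]
    simp only [hφdef, neg_div_neg_eq]
  have hφconst : φ =ᶠ[nhds 0] fun _ => Complex.I / 2 := by
    have hF : F =ᶠ[nhds 0] fun θ => Complex.I * θ / 2 := hdehn
    have h5 : deriv F =ᶠ[nhds 0] deriv (fun θ : ℂ => Complex.I * θ / 2) := hF.deriv
    have h6 : ∀ θ : ℂ, deriv (fun θ : ℂ => Complex.I * θ / 2) θ = Complex.I / 2 := by
      intro θ
      have : HasDerivAt (fun θ : ℂ => Complex.I * θ / 2) (Complex.I * 1 / 2) θ :=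
        ((hasDerivAt_id θ).const_mul Complex.I).div_const 2
      rw [this.deriv]; ring
    refine (hφder.symm.trans h5).trans ?_
    filter_upwards with θ using h6 θ
  -- value at 0
  have e3 : (p:ℂ) * μ + q * lam = -(Complex.I / 2) := by
    have h0 : φ 0 = Complex.I / 2 := hφconst.eq_of_nhds
    simp only [hφdef] at h0
    rw [hm0, hl0] at h0
    have hne : (-1 : ℂ) ≠ 0 := by norm_num
    field_simp at h0
    rw [← hμdef, ← hlamdef] at h0
    linear_combination -h0 / 2
  -- derivative at 0
  have e4 : (p:ℂ) * μ2 + q * lam2 + p * μ ^ 2 + q * lam ^ 2 = 0 := by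
    have hdφ : deriv φ 0 = 0 := by
      rw [hφconst.deriv_eq]
      simp
    have hm0ne : m 0 ≠ 0 := by rw [hm0]; norm_num
    have hl0ne : l 0 ≠ 0 := by rw [hl0]; norm_num
    have Q1 : HasDerivAt (fun θ => deriv m θ / m θ) ((μ2 * m 0 - μ * μ) / m 0 ^ 2) 0 :=
      Hdm0.div Hm0 hm0ne
    have Q2 : HasDerivAt (fun θ => deriv l θ / l θ) ((lam2 * l 0 - lam * lam) / l 0 ^ 2) 0 :=
      Hdl0.div Hl0 hl0ne
    have HΦ := (Q1.const_mul ((p:ℂ))).add (Q2.const_mul ((q:ℂ)))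
    rw [show deriv φ 0 = _ from HΦ.deriv] at hdφ
    rw [hm0, hl0] at hdφ
    field_simp at hdφ
    linear_combination -hdφ
  -- algebra
  have hμ : D * μ = -(Complex.I / 2) := by
    rw [e1] at e3
    rw [hDdef]
    linear_combination e3
  have hμsq : D ^ 2 * μ ^ 2 = -(1:ℂ)/4 := by
    linear_combination (D * μ - Complex.I/2) * hμ + (1/4 : ℂ) * Complex.I_sq
  have hμ2 : D * μ2 = -((p:ℂ) + (a1^2 + a2) * q) * μ ^ 2 := by
    rw [hDdef]
    linear_combination e4 - (q:ℂ) * e2 - (q:ℂ) * (lam + a1 * μ) * e1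
  have h4D : (4 : ℂ) * D ^ 3 ≠ 0 := by
    refine mul_ne_zero (by norm_num) (pow_ne_zero _ hD)
  have hμ2eq : μ2 * (4 * D ^ 3) = (p:ℂ) + (a1^2 + a2) * q := by
    linear_combination 4 * D^2 * hμ2 + (-4 * ((p:ℂ) + (a1^2 + a2) * q)) * hμsq
  have hlam2eq : lam2 * (4 * D ^ 3) = (a1 - a2) * p + a1 ^ 3 * q := by
    linear_combination (4 * D^3) * e2 + a1 * hμ2eq + 4 * a2 * D * hμsq
  have hit2m : iteratedDeriv 2 m 0 = μ2 := by rw [iteratedDeriv_succ, iteratedDeriv_one]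
  have hit2l : iteratedDeriv 2 l 0 = lam2 := by rw [iteratedDeriv_succ, iteratedDeriv_one]
  rw [hit2m, hit2l]
  constructor
  · rw [eq_div_iff h4D]; exact hμ2eq
  · rw [eq_div_iff h4D]; exact hlam2eq
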